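/- With the Wigner bordering setup, let z ∈ ℝ with z ∉ {λ_1, …, λ_N} be an eigenvalue of H_{N+1} (equivalently f(z) = 0), and let u' be the unit eigenvector of H_{N+1} for z normalized so that its last coordinate is positive. Then: (i) the derivative of the secular function satisfies f'(z) = −(1 + Σ_{j=1}^N g_j²/(z − λ_j)²); (ii) the overlaps satisfy Ω_j := ⟨u', (u_j,0)⟩ = (1/√|f'(z)|) · g_j/(z − λ_j) for every 1 ≤ j ≤ N, and the last coordinate of u' equals 1/√|f'(z)|. -/

import Mathlib

open Matrix

/-- The bordered matrix `[[H, g], [gᵀ, a]]` of size `(N+1) × (N+1)`. -/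
def borderMatrix {N : ℕ} (H : Matrix (Fin N) (Fin N) ℝ) (g : Fin N → ℝ) (a : ℝ) :
    Matrix (Fin (N + 1)) (Fin (N + 1)) ℝ :=
  fun i => Fin.lastCases (Fin.snoc g a) (fun i' => Fin.snoc (H i') (g i')) i

/-- **Master equation for the eigenvector overlaps (Wigner case).**
Let `z ∉ {λ_1, …, λ_N}` be an eigenvalue of `H_{N+1}` (equivalently `f(z) = 0`), and let
`u'` be the unit eigenvector of `H_{N+1}` for `z`, normalized so that its last coordinate
is positive.  Then (i) `f'(z) = -(1 + ∑ⱼ gⱼ²/(z - λⱼ)²)`, and (ii) the overlaps satisfy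
`Ωⱼ = ⟪u', (uⱼ,0)⟫ = (1/√|f'(z)|) · gⱼ/(z - λⱼ)` and `(u')_{N+1} = 1/√|f'(z)|`. -/
theorem overlap_master_equation
    (N : ℕ) (HN : Matrix (Fin N) (Fin N) ℝ) (hsymm : HN.IsSymm)
    (lam : Fin N → ℝ) (hmono : StrictMono lam)
    (u : Fin N → Fin N → ℝ)
    (heig : ∀ i, HN.mulVec (u i) = lam i • u i)
    (horth : ∀ i j, u i ⬝ᵥ u j = if i = j then (1 : ℝ) else 0)
    (g : Fin N → ℝ) (gN1 : ℝ)
    (f : ℝ → ℝ)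
    (hf : ∀ t : ℝ, f t = gN1 - t - ∑ j, (u j ⬝ᵥ g) ^ 2 / (lam j - t))
    (z : ℝ) (hz : ∀ j, z ≠ lam j) (hroot : f z = 0)
    (u' : Fin (N + 1) → ℝ)
    (hu'_unit : u' ⬝ᵥ u' = 1)
    (hu'_eig : (borderMatrix HN g gN1).mulVec u' = z • u')
    (hu'_last : 0 < u' (Fin.last N)) :
    deriv f z = -(1 + ∑ j, (u j ⬝ᵥ g) ^ 2 / (z - lam j) ^ 2) ∧
      (∀ j, u' ⬝ᵥ (Fin.snoc (u j) 0 : Fin (N + 1) → ℝ) =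
        (1 / Real.sqrt |deriv f z|) * ((u j ⬝ᵥ g) / (z - lam j))) ∧
      u' (Fin.last N) = 1 / Real.sqrt |deriv f z| := by
  have hzl : ∀ j, z - lam j ≠ 0 := fun j => sub_ne_zero.2 (hz j)
  set S : ℝ := ∑ j, (u j ⬝ᵥ g) ^ 2 / (z - lam j) ^ 2 with hS_def
  have hS0 : 0 ≤ S := Finset.sum_nonneg fun j _ => div_nonneg (sq_nonneg _) (sq_nonneg _)
  have hSpos : 0 < 1 + S := by linarith
  -- (i) the derivative
  have hderiv : deriv f z = -(1 + S) := by
    have hfe : f = fun t => gN1 - t - ∑ j, (u j ⬝ᵥ g) ^ 2 / (lam j - t) := funext hf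
    have hj : ∀ j : Fin N, HasDerivAt (fun t : ℝ => (u j ⬝ᵥ g) ^ 2 / (lam j - t))
        ((u j ⬝ᵥ g) ^ 2 / (lam j - z) ^ 2) z := by
      intro j
      have hden : HasDerivAt (fun t : ℝ => lam j - t) (-1 : ℝ) z := by
        simpa using (hasDerivAt_id z).const_sub (lam j)
      have hne : lam j - z ≠ 0 := sub_ne_zero.2 (Ne.symm (hz j))
      have h := (hasDerivAt_const z ((u j ⬝ᵥ g) ^ 2)).fun_div hden hne
      refine h.congr_deriv ?_
      ring
    have h1 : HasDerivAt (fun t : ℝ => gN1 - t - ∑ j, (u j ⬝ᵥ g) ^ 2 / (lam j - t))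
        (0 - 1 - ∑ j, (u j ⬝ᵥ g) ^ 2 / (lam j - z) ^ 2) z :=
      ((hasDerivAt_const z gN1).sub (hasDerivAt_id z)).sub
        (HasDerivAt.fun_sum fun j _ => hj j)
    rw [hfe, h1.deriv]
    have hsq : ∀ j : Fin N, (u j ⬝ᵥ g) ^ 2 / (lam j - z) ^ 2
        = (u j ⬝ᵥ g) ^ 2 / (z - lam j) ^ 2 := by
      intro j; rw [show (lam j - z) ^ 2 = (z - lam j) ^ 2 by ring]
    rw [Finset.sum_congr rfl fun j _ => hsq j, hS_def]
    ring
  -- (ii) overlaps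
  set β : ℝ := u' (Fin.last N) with hβ
  set v : Fin N → ℝ := fun k => u' k.castSucc with hv
  have hrow : ∀ i : Fin N, HN.mulVec v i + g i * β = z * v i := by
    intro i
    have h := congrFun hu'_eig i.castSucc
    simp only [mulVec, dotProduct, borderMatrix, Fin.lastCases_castSucc, Pi.smul_apply,
      smul_eq_mul] at h
    rw [Fin.sum_univ_castSucc] at h
    simp only [Fin.snoc_castSucc, Fin.snoc_last] at h
    simpa [mulVec, dotProduct, hv, hβ] using h
  have hvec : HN.mulVec v + β • g = z • v := by
    funext i
    have := hrow i
    simpa [mul_comm] using this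
  have hc : ∀ j, v ⬝ᵥ u j = β * ((u j ⬝ᵥ g) / (z - lam j)) := by
    intro j
    have h2 : u j ⬝ᵥ (HN.mulVec v + β • g) = u j ⬝ᵥ (z • v) := by rw [hvec]
    have h3 : u j ⬝ᵥ HN.mulVec v = lam j * (u j ⬝ᵥ v) := by
      calc u j ⬝ᵥ HN.mulVec v = (HNᵀ *ᵥ u j) ⬝ᵥ v := by
            rw [dotProduct_mulVec, mulVec_transpose]
        _ = (HN *ᵥ u j) ⬝ᵥ v := by rw [hsymm.eq]
        _ = (lam j • u j) ⬝ᵥ v := by rw [heig j]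
        _ = lam j * (u j ⬝ᵥ v) := by rw [smul_dotProduct]; simp
    rw [dotProduct_add, dotProduct_smul, dotProduct_smul, h3, smul_eq_mul, smul_eq_mul] at h2
    rw [dotProduct_comm]
    have hne := hzl j
    field_simp
    linear_combination -h2
  -- orthonormal expansion
  set U : Matrix (Fin N) (Fin N) ℝ := Matrix.of u with hU
  have hUU : U * Uᵀ = 1 := by
    ext i j
    have := horth i j
    simpa [Matrix.mul_apply, Matrix.one_apply, dotProduct, hU] using this
  have hUtU : Uᵀ * U = 1 := mul_eq_one_comm.mp hUU
  have hvv : v ⬝ᵥ v = ∑ j, (v ⬝ᵥ u j) ^ 2 := by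
    have h1 : ∀ j, v ⬝ᵥ u j = (U *ᵥ v) j := by
      intro j
      simp [mulVec, dotProduct, hU, mul_comm]
    have h2 : (U *ᵥ v) ⬝ᵥ (U *ᵥ v) = v ⬝ᵥ v := by
      rw [dotProduct_mulVec, vecMul_mulVec, hUtU, vecMul_one]
    calc v ⬝ᵥ v = (U *ᵥ v) ⬝ᵥ (U *ᵥ v) := h2.symm
      _ = ∑ j, (v ⬝ᵥ u j) ^ 2 := by
          rw [dotProduct]
          refine Finset.sum_congr rfl fun j _ => ?_
          rw [h1 j, sq]
  have hsplit : v ⬝ᵥ v + β ^ 2 = 1 := by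
    have h := hu'_unit
    rw [dotProduct, Fin.sum_univ_castSucc] at h
    simpa [dotProduct, sq, hv, hβ] using h
  have hvvS : v ⬝ᵥ v = β ^ 2 * S := by
    rw [hvv, hS_def, Finset.mul_sum]
    refine Finset.sum_congr rfl fun j _ => ?_
    rw [hc j]
    field_simp
  have hβsq : β ^ 2 * (1 + S) = 1 := by linear_combination hsplit - hvvS
  have hβ2 : β ^ 2 = 1 / (1 + S) := by
    field_simp
    linear_combination hβsq
  have hβval : β = 1 / Real.sqrt (1 + S) := by
    have h1 : β = Real.sqrt (β ^ 2) := (Real.sqrt_sq hu'_last.le).symm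
    rw [h1, hβ2, one_div, Real.sqrt_inv, one_div]
  have habs : Real.sqrt |deriv f z| = Real.sqrt (1 + S) := by
    rw [hderiv, abs_neg, abs_of_pos hSpos]
  refine ⟨hderiv, fun j => ?_, ?_⟩
  · have hdp : u' ⬝ᵥ (Fin.snoc (u j) 0 : Fin (N + 1) → ℝ) = v ⬝ᵥ u j := by
      rw [dotProduct, Fin.sum_univ_castSucc]
      simp [dotProduct, hv]
    rw [hdp, hc j, hβval, habs]
  · rw [habs]
    exact hβval
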